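/- For every natural number n ≥ 1 and every integer j with 0 ≤ j ≤ n/2, the sum of binomial coefficients C(n, i) for i = 0 to j is at most 2^(H(j/n)·n), where H(y) = -y·log₂(y) - (1-y)·log₂(1-y) is the binary entropy function (with H(0) interpreted as 0). -/

import Mathlib

/-- Binary entropy function (base-2), with `Real.logb 2 0 = 0` so `binEnt 0 = 0`. -/
noncomputable def binEnt (y : ℝ) : ℝ := -y * Real.logb 2 y - (1 - y) * Real.logb 2 (1 - y)

theorem stirling_binom_sum (n j : ℕ) (hn : 1 ≤ n) (hj : (j : ℝ) ≤ n / 2) :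
    (∑ i ∈ Finset.range (j + 1), (n.choose i) : ℝ) ≤
      2 ^ (binEnt ((j : ℝ) / n) * n) := by
  have hn0 : (0:ℝ) < n := by positivity
  rcases Nat.eq_zero_or_pos j with hj0 | hjpos
  · subst hj0
    simp [binEnt]
  -- main case
  set p : ℝ := (j:ℝ) / n with hp_def
  have hjn : j ≤ n := by
    have : (j:ℝ) ≤ n := le_trans hj (by linarith)
    exact_mod_cast this
  have hp : 0 < p := by positivity
  have hp2 : p ≤ 1/2 := by
    rw [hp_def, div_le_div_iff₀ hn0 two_pos]
    linarith
  have h1p : 0 < 1 - p := by linarith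
  have hpq : p ≤ 1 - p := by linarith
  have hpn : p * n = j := by rw [hp_def]; field_simp
  have hqn : (1 - p) * n = (n:ℝ) - j := by rw [hp_def]; field_simp
  have hcast : ((n - j : ℕ) : ℝ) = (n:ℝ) - j := Nat.cast_sub hjn
  -- binomial theorem bound
  have hA : (∑ i ∈ Finset.range (j + 1),
      (n.choose i : ℝ) * (p ^ i * (1 - p) ^ (n - i))) ≤ 1 := by
    have h2 : (∑ i ∈ Finset.range (j + 1),
        p ^ i * (1 - p) ^ (n - i) * (n.choose i : ℝ)) ≤
        (∑ i ∈ Finset.range (n + 1),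
        p ^ i * (1 - p) ^ (n - i) * (n.choose i : ℝ)) := by
      apply Finset.sum_le_sum_of_subset_of_nonneg
      · exact Finset.range_subset_range.mpr (by omega)
      · intro i _ _
        positivity
    rw [← add_pow] at h2
    calc (∑ i ∈ Finset.range (j + 1), (n.choose i : ℝ) * (p ^ i * (1 - p) ^ (n - i)))
        = ∑ i ∈ Finset.range (j + 1), p ^ i * (1 - p) ^ (n - i) * (n.choose i : ℝ) := by
          apply Finset.sum_congr rfl; intro i _; ring
      _ ≤ (p + (1 - p)) ^ n := h2
      _ = 1 := by norm_num
  -- term bound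
  have hB : ∀ i ∈ Finset.range (j + 1),
      (n.choose i : ℝ) * (p ^ j * (1 - p) ^ (n - j)) ≤
        (n.choose i : ℝ) * (p ^ i * (1 - p) ^ (n - i)) := by
    intro i hi
    have hij : i ≤ j := Nat.lt_succ_iff.mp (Finset.mem_range.mp hi)
    apply mul_le_mul_of_nonneg_left _ (by positivity)
    have e1 : p ^ j = p ^ i * p ^ (j - i) := by
      rw [← pow_add]; congr 1; omega
    have e2 : (1 - p) ^ (n - i) = (1 - p) ^ (j - i) * (1 - p) ^ (n - j) := by
      rw [← pow_add]; congr 1; omega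
    rw [e1, e2]
    have : p ^ (j - i) ≤ (1 - p) ^ (j - i) := pow_le_pow_left₀ hp.le hpq _
    calc p ^ i * p ^ (j - i) * (1 - p) ^ (n - j)
        ≤ p ^ i * (1 - p) ^ (j - i) * (1 - p) ^ (n - j) := by
          apply mul_le_mul_of_nonneg_right _ (by positivity)
          exact mul_le_mul_of_nonneg_left this (by positivity)
      _ = p ^ i * ((1 - p) ^ (j - i) * (1 - p) ^ (n - j)) := by ring
  have hsum : (∑ i ∈ Finset.range (j + 1), (n.choose i : ℝ)) *
      (p ^ j * (1 - p) ^ (n - j)) ≤ 1 := by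
    rw [Finset.sum_mul]
    exact le_trans (Finset.sum_le_sum hB) hA
  have hc : 0 < p ^ j * (1 - p) ^ (n - j) := by positivity
  have hmain : (∑ i ∈ Finset.range (j + 1), (n.choose i : ℝ)) ≤
      (p ^ j * (1 - p) ^ (n - j))⁻¹ := by
    rw [← one_div]
    exact (le_div_iff₀ hc).mpr hsum
  refine hmain.trans (le_of_eq ?_)
  -- show (p^j * (1-p)^(n-j))⁻¹ = 2 ^ (binEnt p * n)
  have hE : binEnt p * n = -((j:ℝ) * Real.logb 2 p) +
      -(((n:ℝ) - j) * Real.logb 2 (1 - p)) := by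
    unfold binEnt
    have : -p * Real.logb 2 p * n = -((p * n) * Real.logb 2 p) := by ring
    rw [show (-p * Real.logb 2 p - (1 - p) * Real.logb 2 (1 - p)) * n
        = -((p * n) * Real.logb 2 p) + -(((1 - p) * n) * Real.logb 2 (1 - p)) by ring,
      hpn, hqn]
  rw [hE, Real.rpow_add two_pos]
  have h2p : (2:ℝ) ^ (-((j:ℝ) * Real.logb 2 p)) = (p ^ j)⁻¹ := by
    rw [Real.rpow_neg (by norm_num), mul_comm, Real.rpow_mul (by norm_num), Real.rpow_logb two_pos (by norm_num) hp, Real.rpow_natCast]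
  have h2q : (2:ℝ) ^ (-(((n:ℝ) - j) * Real.logb 2 (1 - p))) = ((1 - p) ^ (n - j))⁻¹ := by
    rw [← hcast, Real.rpow_neg (by norm_num), mul_comm, Real.rpow_mul (by norm_num),
      Real.rpow_logb two_pos (by norm_num) h1p, Real.rpow_natCast]
  rw [h2p, h2q, mul_inv]
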